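/- For 0 < λ < 1, μ > 0, 0 < ρ < r_{λ,μ}, 1−λ < δ < d_{λ,μ}, the function φ_{λ,μ,δ,ρ} satisfies φ(y+1) = φ(y) + 1 for every real y, and is non-decreasing on [0,1); if moreover ρ is irrational it is strictly increasing on [0,1). -/

import Mathlib

noncomputable def Kfn (rho y : ℝ) (i : ℕ) : ℕ := (⌊(y + i) / rho⌋).toNat + 1

/-- The conjugation function φ_{λ,μ,δ,ρ}. -/
noncomputable def phiFn (lam mu del rho y : ℝ) : ℝ :=
  (⌊y⌋ : ℝ) + (1 - del) / lam +
    ∑' k : ℕ, lam ^ k * mu ^ (⌊y⌋ - ⌊y - (k : ℝ) * rho⌋) *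
      ((lam + del - 1) / lam + ((⌊y - ((k : ℝ) + 1) * rho⌋ : ℝ) - (⌊y - (k : ℝ) * rho⌋ : ℝ)))

section
variable {lam mu del rho : ℝ}


lemma rho_lt_one (hlam0 : 0 < lam) (hlam1 : lam < 1) (hmu : 0 < mu)
    (hrho1 : rho < if lam * mu < 1 then 1 else -Real.log lam / Real.log mu) : rho < 1 := by
  split_ifs at hrho1 with h
  · exact hrho1
  · push_neg at h
    have hmu1 : 1 < mu := by nlinarith
    have hlogmu : 0 < Real.log mu := Real.log_pos hmu1
    refine hrho1.trans_le ?_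
    rw [div_le_one hlogmu]
    have h2 : Real.log 1 ≤ Real.log (lam * mu) :=
      Real.log_le_log (by norm_num) (by linarith)
    rw [Real.log_one, Real.log_mul hlam0.ne' hmu.ne'] at h2
    linarith

lemma geom_aux (hlam0 : 0 < lam) (hlam1 : lam < 1) (hmu : 0 < mu) (hrho0 : 0 < rho)
    (hrho1 : rho < if lam * mu < 1 then 1 else -Real.log lam / Real.log mu) :
    lam * mu ^ rho < 1 := by
  split_ifs at hrho1 with h
  · rcases le_or_gt mu 1 with hmu1 | hmu1
    · have : mu ^ rho ≤ 1 := Real.rpow_le_one hmu.le hmu1 hrho0.le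
      nlinarith
    · have : mu ^ rho < mu ^ (1:ℝ) := Real.rpow_lt_rpow_of_exponent_lt hmu1 hrho1
      rw [Real.rpow_one] at this
      nlinarith [Real.rpow_pos_of_pos hmu rho]
  · push_neg at h
    have hmu1 : 1 < mu := by nlinarith
    have hlogmu : 0 < Real.log mu := Real.log_pos hmu1
    have h1 : rho * Real.log mu < -Real.log lam := by
      rw [div_eq_mul_inv] at hrho1
      calc rho * Real.log mu < (-Real.log lam * (Real.log mu)⁻¹) * Real.log mu := by
            exact mul_lt_mul_of_pos_right hrho1 hlogmu
        _ = -Real.log lam := by field_simp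
    have h2 : Real.log (lam * mu ^ rho) < 0 := by
      rw [Real.log_mul hlam0.ne' (Real.rpow_pos_of_pos hmu rho).ne', Real.log_rpow hmu]
      linarith
    have := (Real.log_neg_iff (by positivity)).mp h2
    exact this

lemma key_ineq (hlam0 : 0 < lam) (hlam1 : lam < 1) (hmu : 0 < mu)
    (hdel1 : 1 - lam < del)
    (hdel2 : del < if lam * mu < 1 then 1 else (mu - lam * mu) / (mu - 1)) :
    (lam + del - 1) * (mu - 1) < 1 - lam := by
  rcases le_or_gt mu 1 with hmu1 | hmu1
  · nlinarith
  · split_ifs at hdel2 with h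
    · nlinarith
    · push_neg at h
      have h2 : del * (mu - 1) < mu - lam * mu := by
        rw [lt_div_iff₀ (by linarith)] at hdel2
        exact hdel2
      nlinarith





lemma Kfn_iff (hrho0 : 0 < rho) {y : ℝ} (hy0 : 0 ≤ y) (i k : ℕ) :
    Kfn rho y i ≤ k ↔ (i : ℤ) + 1 ≤ -⌊y - (k : ℝ) * rho⌋ := by
  have h0 : 0 ≤ ⌊(y + i) / rho⌋ := Int.floor_nonneg.2 (by positivity)
  have h1 : Kfn rho y i ≤ k ↔ ⌊(y + i) / rho⌋ < (k : ℤ) := by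
    unfold Kfn; omega
  rw [h1, Int.floor_lt]
  have h2 : (y + i) / rho < (k : ℝ) ↔ y + i < k * rho := div_lt_iff₀ hrho0
  push_cast
  rw [h2]
  have h3 : y + i < k * rho ↔ y - k * rho < -(i : ℝ) := by constructor <;> intro <;> linarith
  rw [h3, show (-(i:ℝ)) = ((-(i:ℤ) : ℤ) : ℝ) by push_cast; ring, ← Int.floor_lt]
  omega

lemma Kfn_ge (hrho0 : 0 < rho) {y : ℝ} (hy0 : 0 ≤ y) (i : ℕ) :
    (i : ℝ) / rho ≤ (Kfn rho y i : ℝ) := by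
  have h0 : 0 ≤ ⌊(y + i) / rho⌋ := Int.floor_nonneg.2 (by positivity)
  have hc : ((⌊(y + i) / rho⌋.toNat : ℕ) : ℝ) = ((⌊(y + i) / rho⌋ : ℤ) : ℝ) := by
    exact_mod_cast congrArg (fun z : ℤ => (z : ℝ)) (Int.toNat_of_nonneg h0)
  have h1 : ((Kfn rho y i : ℕ) : ℝ) = (⌊(y + i) / rho⌋ : ℝ) + 1 := by
    unfold Kfn
    rw [Nat.cast_add, Nat.cast_one, hc]
  rw [h1]
  have h2 : (y + i) / rho < (⌊(y + i) / rho⌋ : ℝ) + 1 := Int.lt_floor_add_one _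
  have h3 : (i : ℝ) / rho ≤ (y + i) / rho := by gcongr <;> linarith
  linarith

lemma summable_K_aux (hlam0 : 0 < lam) (hlam1 : lam < 1) (hmu : 0 < mu) (hrho0 : 0 < rho)
    (hA : lam * mu ^ rho < 1) {y : ℝ} (hy0 : 0 ≤ y) :
    Summable (fun i : ℕ => mu ^ i * lam ^ (Kfn rho y i)) := by
  set a : ℝ := lam ^ (1 / rho) with ha
  have ha0 : 0 < a := Real.rpow_pos_of_pos hlam0 _
  have hma : mu * a < 1 := by
    have h1 : mu * a = (lam * mu ^ rho) ^ (1 / rho) := by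
      rw [Real.mul_rpow hlam0.le (Real.rpow_pos_of_pos hmu rho).le, ha,
        ← Real.rpow_mul hmu.le, mul_one_div, div_self hrho0.ne', Real.rpow_one]
      ring
    rw [h1]
    exact Real.rpow_lt_one (by positivity) hA (by positivity)
  refine Summable.of_nonneg_of_le (fun i => by positivity)
    (fun i => ?_) (summable_geometric_of_lt_one (by positivity) hma)
  have h2 : lam ^ (Kfn rho y i) ≤ a ^ i := by
    have e1 : lam ^ (Kfn rho y i) = lam ^ ((Kfn rho y i : ℕ) : ℝ) :=
      (Real.rpow_natCast lam _).symm
    have e2 : (a : ℝ) ^ i = lam ^ ((1 / rho) * (i : ℝ)) := by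
      rw [ha, ← Real.rpow_natCast (lam ^ (1/rho)) i, ← Real.rpow_mul hlam0.le]
    rw [e1, e2]
    apply Real.rpow_le_rpow_of_exponent_ge hlam0 hlam1.le
    have h := Kfn_ge hrho0 hy0 i
    calc (1/rho) * (i:ℝ) = (i:ℝ)/rho := by ring
      _ ≤ _ := h
  calc mu ^ i * lam ^ (Kfn rho y i) ≤ mu ^ i * a ^ i :=
        mul_le_mul_of_nonneg_left h2 (by positivity)
    _ = (mu * a) ^ i := (mul_pow _ _ _).symm


lemma phi_period (lam mu del rho y : ℝ) :
    phiFn lam mu del rho (y + 1) = phiFn lam mu del rho y + 1 := by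
  unfold phiFn
  have hts : (∑' k : ℕ, lam ^ k * mu ^ (⌊y + 1⌋ - ⌊y + 1 - (k : ℝ) * rho⌋) *
      ((lam + del - 1) / lam + ((⌊y + 1 - ((k : ℝ) + 1) * rho⌋ : ℝ) - (⌊y + 1 - (k : ℝ) * rho⌋ : ℝ))))
      = ∑' k : ℕ, lam ^ k * mu ^ (⌊y⌋ - ⌊y - (k : ℝ) * rho⌋) *
      ((lam + del - 1) / lam + ((⌊y - ((k : ℝ) + 1) * rho⌋ : ℝ) - (⌊y - (k : ℝ) * rho⌋ : ℝ))) := by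
    refine tsum_congr fun k => ?_
    have e1 : y + 1 - (k : ℝ) * rho = (y - (k : ℝ) * rho) + 1 := by ring
    have e2 : y + 1 - ((k : ℝ) + 1) * rho = (y - ((k : ℝ) + 1) * rho) + 1 := by ring
    rw [e1, e2, Int.floor_add_one, Int.floor_add_one, Int.floor_add_one]
    have e3 : (⌊y⌋ + 1 - (⌊y - (k : ℝ) * rho⌋ + 1)) = ⌊y⌋ - ⌊y - (k : ℝ) * rho⌋ := by ring
    rw [e3]
    push_cast
    ring
  rw [hts, Int.floor_add_one]
  push_cast
  ring



lemma tsum_geom_tail (hlam0 : 0 < lam) (hlam1 : lam < 1) (m : ℕ) :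
    ∑' k : ℕ, (if m ≤ k then lam ^ k else 0) = lam ^ m * (1 - lam)⁻¹ := by
  have hinj : Function.Injective (fun j : ℕ => j + m) := add_left_injective m
  rw [← Function.Injective.tsum_eq hinj (f := fun k : ℕ => if m ≤ k then lam ^ k else 0) ?_]
  · have h1 : ∀ j : ℕ, (if m ≤ j + m then lam ^ (j + m) else 0) = lam ^ j * lam ^ m := by
      intro j; rw [if_pos (Nat.le_add_left m j), pow_add]
    rw [tsum_congr h1, tsum_mul_right, tsum_geometric_of_lt_one hlam0.le hlam1, mul_comm,
      mul_comm (lam ^ m)]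
  · intro x hx
    simp only [Function.mem_support] at hx
    have hmx : m ≤ x := by by_contra h; exact hx (if_neg h)
    exact ⟨x - m, by simpa using Nat.sub_add_cancel hmx⟩

lemma closed_form (hlam0 : 0 < lam) (hlam1 : lam < 1) (hmu : 0 < mu) (hrho0 : 0 < rho)
    (hrho2 : rho < 1) (hA : lam * mu ^ rho < 1)
    {y : ℝ} (hSK : Summable (fun i : ℕ => mu ^ i * lam ^ (Kfn rho y i)))
    (hy0 : 0 ≤ y) (hy1 : y < 1) :
    phiFn lam mu del rho y =
      (1 - del) / lam + (lam + del - 1) / (lam * (1 - lam)) +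
        ((lam + del - 1) * (mu - 1) - (1 - lam)) / (lam * (1 - lam)) *
          ∑' i : ℕ, mu ^ i * lam ^ (Kfn rho y i) := by
  have hfy : ⌊y⌋ = 0 := Int.floor_eq_zero_iff.2 ⟨hy0, hy1⟩
  set N : ℕ → ℕ := fun k => (-⌊y - k * rho⌋).toNat with hNdef
  have hNflr : ∀ k : ℕ, ((N k : ℤ)) = -⌊y - (k : ℝ) * rho⌋ := by
    intro k
    apply Int.toNat_of_nonneg
    have h1 : ⌊y - (k : ℝ) * rho⌋ ≤ ⌊y⌋ :=
      Int.floor_le_floor (by nlinarith [mul_nonneg (Nat.cast_nonneg k : (0:ℝ) ≤ (k:ℝ)) hrho0.le])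
    omega
  have hcast1 : ∀ k : ℕ, ((k + 1 : ℕ) : ℝ) = (k : ℝ) + 1 := fun k => by push_cast; ring
  have hflr_pair : ∀ k : ℕ, ⌊y - ((k:ℝ)+1) * rho⌋ ≤ ⌊y - (k:ℝ) * rho⌋ ∧
      ⌊y - (k:ℝ) * rho⌋ - 1 ≤ ⌊y - ((k:ℝ)+1) * rho⌋ := by
    intro k
    constructor
    · exact Int.floor_le_floor (by nlinarith)
    · rw [show ⌊y - (k:ℝ) * rho⌋ - 1 = ⌊(y - (k:ℝ) * rho) - 1⌋ by rw [Int.floor_sub_one]]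
      exact Int.floor_le_floor (by nlinarith)
  have hNsucc : ∀ k : ℕ, ((N (k+1) : ℤ)) = -⌊y - ((k:ℝ)+1) * rho⌋ := by
    intro k
    rw [hNflr (k+1), hcast1 k]
  have hNmono : ∀ k : ℕ, N k ≤ N (k+1) := by
    intro k
    have h1 := hNflr k; have h2 := hNsucc k; have h3 := (hflr_pair k).1
    omega
  have hNstep : ∀ k : ℕ, N (k+1) ≤ N k + 1 := by
    intro k
    have h1 := hNflr k; have h2 := hNsucc k; have h3 := (hflr_pair k).2
    omega
  have hE1 : ∀ i k : ℕ, (Kfn rho y i ≤ k ↔ i + 1 ≤ N k) := by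
    intro i k
    rw [Kfn_iff hrho0 hy0 i k]
    have h1 := hNflr k
    omega
  have hE2 : ∀ i k : ℕ, (Kfn rho y i = k + 1 ↔ (N k ≤ i ∧ i + 1 ≤ N (k+1))) := by
    intro i k
    have h1 := hE1 i k; have h2 := hE1 i (k+1)
    omega
  have P1 : ∀ k : ℕ, (mu:ℝ) ^ (N k) =
      1 + ∑' i : ℕ, (if Kfn rho y i ≤ k then mu ^ (i+1) - mu ^ i else 0) := by
    intro k
    have hs : ∑' i : ℕ, (if Kfn rho y i ≤ k then mu ^ (i+1) - mu ^ i else 0)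
        = ∑ i ∈ Finset.range (N k), (mu ^ (i+1) - mu ^ i) := by
      rw [tsum_eq_sum (s := Finset.range (N k))
        (fun b hb => if_neg (fun h => hb (Finset.mem_range.2 (by have := (hE1 b k).1 h; omega))))]
      exact Finset.sum_congr rfl fun i hi =>
        if_pos ((hE1 i k).2 (by have := Finset.mem_range.1 hi; omega))
    rw [hs, Finset.sum_range_sub (f := fun i => (mu:ℝ) ^ i), pow_zero]
    ring
  have P2 : ∀ k : ℕ, (mu:ℝ) ^ (N k) * ((N (k+1) : ℝ) - (N k : ℝ)) =
      ∑' i : ℕ, (if Kfn rho y i = k + 1 then mu ^ i else 0) := by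
    intro k
    have hd := hNmono k; have hstp := hNstep k
    rcases Nat.lt_or_ge (N k) (N (k+1)) with hlt | hge
    · have heq : N (k+1) = N k + 1 := by omega
      have hval : ∑' i : ℕ, (if Kfn rho y i = k + 1 then mu ^ i else 0) = mu ^ (N k) := by
        rw [tsum_eq_single (N k) (fun b hb => if_neg (fun h => by
          rw [hE2 b k] at h; omega))]
        exact if_pos ((hE2 (N k) k).2 (by omega))
      rw [hval, heq]
      push_cast
      ring
    · have heq : N (k+1) = N k := by omega
      have hval : ∑' i : ℕ, (if Kfn rho y i = k + 1 then mu ^ i else 0) = 0 := by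
        have : ∀ i : ℕ, (if Kfn rho y i = k + 1 then (mu:ℝ) ^ i else 0) = 0 := by
          intro i
          apply if_neg
          rw [hE2 i k]
          omega
        rw [tsum_congr this, tsum_zero]
      rw [hval, heq]
      ring
  have h10 : lam ≠ 0 := hlam0.ne'
  have h11 : (1:ℝ) - lam ≠ 0 := by linarith
  -- summability of the main series
  have hNle : ∀ k : ℕ, ((N k : ℝ)) ≤ k * rho + 1 := by
    intro k
    have h1 : (y - (k:ℝ) * rho) - 1 < (⌊y - (k:ℝ) * rho⌋ : ℝ) := Int.sub_one_lt_floor _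
    have h2 : ((N k : ℝ)) = -((⌊y - (k:ℝ)*rho⌋ : ℤ) : ℝ) := by
      exact_mod_cast congrArg (fun z : ℤ => (z:ℝ)) (hNflr k)
    rw [h2]
    push_cast
    linarith
  have hq1 : lam * max 1 (mu ^ rho) < 1 := by
    rw [mul_max_of_nonneg _ _ hlam0.le]
    apply max_lt
    · rw [mul_one]; exact hlam1
    · exact hA
  have hbound : ∀ k : ℕ, lam ^ k * mu ^ (N k) ≤ max 1 mu * (lam * max 1 (mu ^ rho)) ^ k := by
    intro k
    have hrpow_nonneg : (0:ℝ) ≤ mu ^ rho := Real.rpow_nonneg hmu.le rho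
    have key : (mu:ℝ) ^ (N k) ≤ max 1 mu * (max 1 (mu ^ rho)) ^ k := by
      rcases le_or_gt mu 1 with hmu1 | hmu1
      · have h1 : (mu:ℝ) ^ (N k) ≤ 1 := pow_le_one₀ hmu.le hmu1
        have h2 : (1:ℝ) ≤ (max 1 (mu ^ rho)) ^ k := one_le_pow₀ (le_max_left _ _)
        nlinarith [le_max_left (1:ℝ) mu]
      · have e1 : (mu:ℝ) ^ (N k) = mu ^ ((N k : ℕ) : ℝ) := (Real.rpow_natCast mu _).symm
        have h3 : mu ^ ((N k : ℕ) : ℝ) ≤ mu ^ ((k:ℝ) * rho + 1) :=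
          Real.rpow_le_rpow_of_exponent_le hmu1.le (hNle k)
        have h4 : mu ^ ((k:ℝ) * rho + 1) = mu * (mu ^ rho) ^ k := by
          rw [Real.rpow_add hmu, Real.rpow_one, ← Real.rpow_natCast (mu ^ rho) k,
            ← Real.rpow_mul hmu.le, mul_comm rho (k:ℝ)]
          ring
        have h5 : (mu ^ rho) ^ k ≤ (max 1 (mu ^ rho)) ^ k :=
          pow_le_pow_left₀ hrpow_nonneg (le_max_right _ _) k
        calc (mu:ℝ) ^ (N k) ≤ mu * (mu ^ rho) ^ k := by rw [e1, ← h4]; exact h3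
          _ ≤ max 1 mu * (max 1 (mu ^ rho)) ^ k :=
            mul_le_mul (le_max_right _ _) h5 (by positivity) (by positivity)
    calc lam ^ k * mu ^ (N k) ≤ lam ^ k * (max 1 mu * (max 1 (mu ^ rho)) ^ k) :=
          mul_le_mul_of_nonneg_left key (pow_nonneg hlam0.le k)
      _ = max 1 mu * (lam * max 1 (mu ^ rho)) ^ k := by rw [mul_pow]; ring
  have hSt1 : Summable (fun k : ℕ => lam ^ k * mu ^ (N k)) :=
    Summable.of_nonneg_of_le (fun k => by positivity) hbound
      ((summable_geometric_of_lt_one (by positivity) hq1).mul_left _)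
  have hchi_nonneg : ∀ k : ℕ, 0 ≤ ((N (k+1) : ℝ) - (N k : ℝ)) := by
    intro k
    have h1 : ((N k : ℝ)) ≤ ((N (k+1) : ℝ)) := by exact_mod_cast hNmono k
    linarith
  have hchi_le : ∀ k : ℕ, ((N (k+1) : ℝ) - (N k : ℝ)) ≤ 1 := by
    intro k
    have h1 : ((N (k+1) : ℝ)) ≤ ((N k : ℝ)) + 1 := by exact_mod_cast hNstep k
    linarith
  have hSt2 : Summable (fun k : ℕ => lam ^ k * (mu ^ (N k) * ((N (k+1) : ℝ) - (N k : ℝ)))) := by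
    apply Summable.of_nonneg_of_le (fun k => ?_) (fun k => ?_) hSt1
    · exact mul_nonneg (pow_nonneg hlam0.le k)
        (mul_nonneg (pow_nonneg hmu.le _) (hchi_nonneg k))
    · have h1 : mu ^ (N k) * ((N (k+1) : ℝ) - (N k : ℝ)) ≤ mu ^ (N k) * 1 :=
        mul_le_mul_of_nonneg_left (hchi_le k) (pow_nonneg hmu.le _)
      rw [mul_one] at h1
      exact mul_le_mul_of_nonneg_left h1 (pow_nonneg hlam0.le k)
  -- the `g` family
  set d : ℕ → ℝ := fun i => mu ^ (i+1) - mu ^ i with hd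
  set g : ℕ → ℕ → ℝ := fun i k => lam ^ k * (if Kfn rho y i ≤ k then d i else 0) with hg
  have hIg : ∀ i : ℕ, ∑' k : ℕ, (if Kfn rho y i ≤ k then lam ^ k * |d i| else 0)
      = lam ^ (Kfn rho y i) * (1 - lam)⁻¹ * |d i| := by
    intro i
    have h1 : ∀ k : ℕ, (if Kfn rho y i ≤ k then lam ^ k * |d i| else 0)
        = (if Kfn rho y i ≤ k then lam ^ k else 0) * |d i| := by
      intro k
      by_cases h : Kfn rho y i ≤ k <;> simp [h]
    rw [tsum_congr h1, tsum_mul_right, tsum_geom_tail hlam0 hlam1]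
  have hd_abs : ∀ i : ℕ, |d i| = mu ^ i * |mu - 1| := by
    intro i
    simp only [hd]
    rw [show mu ^ (i+1) - mu ^ i = mu ^ i * (mu - 1) by rw [pow_succ]; ring, abs_mul,
      abs_of_nonneg (pow_nonneg hmu.le i)]
  have hgsum : Summable (Function.uncurry g) := by
    rw [← summable_abs_iff]
    have habs : (fun p : ℕ × ℕ => |Function.uncurry g p|)
        = fun p : ℕ × ℕ => (if Kfn rho y p.1 ≤ p.2 then lam ^ p.2 * |d p.1| else 0) := by
      funext p
      rcases p with ⟨i, k⟩
      by_cases h : Kfn rho y i ≤ k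
      · simp [Function.uncurry, hg, h, abs_mul, abs_of_nonneg (pow_nonneg hlam0.le k)]
      · simp [Function.uncurry, hg, h]
    rw [habs]
    apply (summable_prod_of_nonneg ?_).2
    constructor
    · intro i
      apply Summable.of_nonneg_of_le (fun k => ?_) (fun k => ?_)
        ((summable_geometric_of_lt_one hlam0.le hlam1).mul_right |d i|)
      · by_cases h : Kfn rho y i ≤ k <;> simp [h] <;> positivity
      · by_cases h : Kfn rho y i ≤ k
        · rw [if_pos h]
        · rw [if_neg h]; positivity
    · apply Summable.congr
        (f := fun i : ℕ => (1 - lam)⁻¹ * |mu - 1| * (mu ^ i * lam ^ (Kfn rho y i)))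
        (hSK.mul_left _)
      intro i
      rw [hIg i, hd_abs i]
      ring
    · intro p
      by_cases h : Kfn rho y p.1 ≤ p.2
      · simp only [h, if_true]; positivity
      · simp only [h, if_false]; exact le_refl 0
  have hsum_g_k : ∀ i : ℕ, ∑' k : ℕ, g i k = d i * (lam ^ (Kfn rho y i) * (1 - lam)⁻¹) := by
    intro i
    have h1 : ∀ k : ℕ, g i k = (if Kfn rho y i ≤ k then lam ^ k else 0) * d i := by
      intro k
      by_cases h : Kfn rho y i ≤ k <;> simp [hg, h]
    rw [tsum_congr h1, tsum_mul_right, tsum_geom_tail hlam0 hlam1, mul_comm]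
  have hP1' : ∀ k : ℕ, lam ^ k * mu ^ (N k) = lam ^ k + ∑' i : ℕ, g i k := by
    intro k
    simp only [hg]
    rw [P1 k, mul_add, mul_one, ← tsum_mul_left]
  -- the `Fh` family
  set Fh : ℕ → ℕ → ℝ := fun i k => lam ^ k * (if Kfn rho y i = k + 1 then mu ^ i else 0) with hFh
  have hK1 : ∀ i : ℕ, 1 ≤ Kfn rho y i := fun i => by unfold Kfn; omega
  have hI2 : ∀ i : ℕ, ∑' k : ℕ, Fh i k = lam ^ (Kfn rho y i - 1) * mu ^ i := by
    intro i
    rw [tsum_eq_single (Kfn rho y i - 1) (fun b hb => ?_)]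
    · simp only [hFh]
      rw [if_pos (by have := hK1 i; omega)]
    · simp only [hFh]
      rw [if_neg (by have := hK1 i; omega), mul_zero]
  have hradix : ∀ i : ℕ, lam ^ (Kfn rho y i - 1) * mu ^ i
      = lam⁻¹ * (mu ^ i * lam ^ (Kfn rho y i)) := by
    intro i
    have h1 : Kfn rho y i - 1 + 1 = Kfn rho y i := by have := hK1 i; omega
    rw [← h1, pow_succ, Nat.add_sub_cancel]
    field_simp
  have hhsum : Summable (Function.uncurry Fh) := by
    apply (summable_prod_of_nonneg ?_).2
    constructor
    · intro i
      apply summable_of_ne_finset_zero (s := {Kfn rho y i - 1})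
      intro b hb
      simp only [Finset.mem_singleton] at hb
      show Fh i b = 0
      simp only [hFh]
      rw [if_neg (show ¬ Kfn rho y i = b + 1 by have := hK1 i; omega), mul_zero]
    · apply Summable.congr
        (f := fun i : ℕ => lam⁻¹ * (mu ^ i * lam ^ (Kfn rho y i))) (hSK.mul_left _)
      intro i
      exact ((hI2 i).trans (hradix i)).symm
    · intro p
      simp only [hFh, Function.uncurry]
      by_cases h : Kfn rho y p.1 = p.2 + 1
      · simp only [h, if_true]; positivity
      · simp only [h, if_false, mul_zero]; exact le_refl 0
  -- rewrite each term of the series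
  have hterm : ∀ k : ℕ, lam ^ k * mu ^ ((0:ℤ) - ⌊y - (k:ℝ) * rho⌋) *
      ((lam + del - 1) / lam + ((⌊y - ((k:ℝ)+1) * rho⌋ : ℝ) - (⌊y - (k:ℝ) * rho⌋ : ℝ)))
      = (lam + del - 1) / lam * (lam ^ k * mu ^ (N k))
        - lam ^ k * (mu ^ (N k) * ((N (k+1) : ℝ) - (N k : ℝ))) := by
    intro k
    have hz : mu ^ ((0:ℤ) - ⌊y - (k:ℝ) * rho⌋) = mu ^ (N k) := by
      rw [zero_sub, ← hNflr k, zpow_natCast]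
    have hf1 : ((⌊y - ((k:ℝ)+1) * rho⌋ : ℤ) : ℝ) = -((N (k+1) : ℝ)) := by
      exact_mod_cast congrArg (fun z : ℤ => (z:ℝ))
        (by have := hNsucc k; omega : ⌊y - ((k:ℝ)+1) * rho⌋ = -((N (k+1) : ℕ) : ℤ))
    have hf2 : ((⌊y - (k:ℝ) * rho⌋ : ℤ) : ℝ) = -((N k : ℝ)) := by
      exact_mod_cast congrArg (fun z : ℤ => (z:ℝ))
        (by have := hNflr k; omega : ⌊y - (k:ℝ) * rho⌋ = -((N k : ℕ) : ℤ))
    rw [hz, hf1, hf2]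
    ring
  unfold phiFn
  rw [hfy]
  rw [tsum_congr hterm]
  rw [Summable.tsum_sub (hSt1.mul_left _) hSt2, tsum_mul_left]
  have hT1 : ∑' k : ℕ, lam ^ k * mu ^ (N k)
      = (1 - lam)⁻¹ + (mu - 1) * (1 - lam)⁻¹ * ∑' i : ℕ, mu ^ i * lam ^ (Kfn rho y i) := by
    rw [tsum_congr hP1']
    have hZ : Summable (fun k : ℕ => ∑' i : ℕ, g i k) := by
      apply Summable.congr (f := fun k : ℕ => lam ^ k * mu ^ (N k) - lam ^ k)
        (hSt1.sub (summable_geometric_of_lt_one hlam0.le hlam1))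
      intro k
      have := hP1' k
      linarith
    rw [Summable.tsum_add (summable_geometric_of_lt_one hlam0.le hlam1) hZ,
      tsum_geometric_of_lt_one hlam0.le hlam1]
    congr 1
    rw [Summable.tsum_comm hgsum, tsum_congr hsum_g_k]
    have h2 : ∀ i : ℕ, d i * (lam ^ (Kfn rho y i) * (1 - lam)⁻¹)
        = (mu - 1) * (1 - lam)⁻¹ * (mu ^ i * lam ^ (Kfn rho y i)) := by
      intro i
      simp only [hd]
      rw [pow_succ]
      ring
    rw [tsum_congr h2, tsum_mul_left]
  have hT2 : ∑' k : ℕ, lam ^ k * (mu ^ (N k) * ((N (k+1) : ℝ) - (N k : ℝ)))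
      = lam⁻¹ * ∑' i : ℕ, mu ^ i * lam ^ (Kfn rho y i) := by
    have h1 : ∀ k : ℕ, lam ^ k * (mu ^ (N k) * ((N (k+1) : ℝ) - (N k : ℝ)))
        = ∑' i : ℕ, Fh i k := by
      intro k
      simp only [hFh]
      rw [P2 k, ← tsum_mul_left]
    rw [tsum_congr h1, Summable.tsum_comm hhsum, tsum_congr hI2, tsum_congr hradix, tsum_mul_left]
  rw [hT1, hT2]
  push_cast
  field_simp
  ring





lemma exists_beta (hrho0 : 0 < rho) (hirr : Irrational rho) {eps : ℝ} (heps0 : 0 < eps)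
    (heps1 : eps ≤ 1) :
    ∃ β : ℝ, 0 < β ∧ β < eps ∧ ∃ m : ℕ, 1 ≤ m ∧
      (Int.fract ((m : ℝ) * rho) = β ∨ Int.fract ((m : ℝ) * rho) = 1 - β) := by
  set S : AddSubgroup ℝ := AddSubgroup.closure ({1, rho} : Set ℝ) with hSdef
  have hdense : Dense (S : Set ℝ) := by
    rcases AddSubgroup.dense_or_cyclic S with h | ⟨a, ha⟩
    · exact h
    · exfalso
      have h1 : (1 : ℝ) ∈ S := AddSubgroup.subset_closure (by simp)
      have h2 : rho ∈ S := AddSubgroup.subset_closure (by simp)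
      rw [ha, AddSubgroup.mem_closure_singleton] at h1 h2
      obtain ⟨n, hn⟩ := h1
      obtain ⟨m, hm⟩ := h2
      have hn0 : (n : ℝ) ≠ 0 := by
        intro h
        rw [zsmul_eq_mul, h, zero_mul] at hn
        norm_num at hn
      rw [zsmul_eq_mul] at hn hm
      have : rho = (m : ℝ) / (n : ℝ) := by
        have ha0 : a = 1 / n := by field_simp at hn ⊢; linarith [hn]
        rw [← hm, ha0]
        ring
      exact (irrational_iff_ne_rational rho).1 hirr m n (by exact_mod_cast hn0) this
  obtain ⟨g, hgS, hg⟩ := hdense.exists_mem_open isOpen_Ioo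
    (Set.nonempty_Ioo.2 heps0 : (Set.Ioo (0:ℝ) eps).Nonempty)
  obtain ⟨hg0, hge⟩ := hg
  have hg1 : g < 1 := lt_of_lt_of_le hge heps1
  have hgS' : g ∈ S := hgS
  have hpair : ({1, rho} : Set ℝ) = {1} ∪ {rho} := by rw [Set.singleton_union]
  rw [hSdef, hpair, AddSubgroup.closure_union, AddSubgroup.mem_sup] at hgS'
  obtain ⟨p, hp, q, hq, hpq⟩ := hgS'
  rw [AddSubgroup.mem_closure_singleton] at hp hq
  obtain ⟨n, hn⟩ := hp
  obtain ⟨m, hm⟩ := hq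
  rw [zsmul_eq_mul, mul_one] at hn
  rw [zsmul_eq_mul] at hm
  have hgnm : g = (n : ℝ) + (m : ℝ) * rho := by rw [hn, hm, hpq]
  have hm0 : m ≠ 0 := by
    intro h
    rw [h] at hgnm
    push_cast at hgnm
    have hgn : g = (n : ℝ) := by linarith
    rw [hgn] at hg0 hg1
    have h1 : (0 : ℤ) < n := by exact_mod_cast hg0
    have h2 : (n : ℤ) < 1 := by exact_mod_cast hg1
    omega
  have hfract : Int.fract ((m : ℝ) * rho) = g := by
    have h3 : (m : ℝ) * rho = g + ((-n : ℤ) : ℝ) := by push_cast; linarith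
    rw [h3, Int.fract_add_intCast, Int.fract_eq_self.2 ⟨hg0.le, hg1⟩]
  rcases lt_or_gt_of_ne hm0 with hmneg | hmpos
  · refine ⟨g, hg0, hge, (-m).toNat, by omega, Or.inr ?_⟩
    have hcast : ((((-m).toNat : ℕ) : ℝ)) * rho = -((m : ℝ) * rho) := by
      have h4 : (((-m).toNat : ℕ) : ℝ) = ((-m : ℤ) : ℝ) := by
        exact_mod_cast congrArg (fun z : ℤ => (z : ℝ)) (Int.toNat_of_nonneg (by omega))
      rw [h4]
      push_cast
      ring
    rw [hcast, Int.fract_neg (by rw [hfract]; exact hg0.ne'), hfract]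
  · refine ⟨g, hg0, hge, m.toNat, by omega, Or.inl ?_⟩
    have hcast : (((m.toNat : ℕ) : ℝ)) * rho = (m : ℝ) * rho := by
      have h4 : (((m.toNat : ℕ) : ℝ)) = ((m : ℤ) : ℝ) := by
        exact_mod_cast congrArg (fun z : ℤ => (z : ℝ)) (Int.toNat_of_nonneg (by omega))
      rw [h4]
    rw [hcast, hfract]

lemma exists_step {β t : ℝ} (hb0 : 0 < β) (ht : 0 ≤ t) :
    ∃ k : ℕ, 1 ≤ k ∧ t < k * β ∧ (k : ℝ) * β ≤ t + β := by
  have h0 : 0 ≤ ⌊t / β⌋ := Int.floor_nonneg.2 (by positivity)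
  have hc2 : ((⌊t / β⌋.toNat : ℕ) : ℝ) = (⌊t / β⌋ : ℝ) := by
    exact_mod_cast congrArg (fun z : ℤ => (z : ℝ)) (Int.toNat_of_nonneg h0)
  have hcast : (((⌊t / β⌋).toNat + 1 : ℕ) : ℝ) = (⌊t / β⌋ : ℝ) + 1 := by
    rw [Nat.cast_add, Nat.cast_one, hc2]
  refine ⟨(⌊t / β⌋).toNat + 1, by omega, ?_, ?_⟩
  · rw [hcast]
    have h5 : t / β < (⌊t / β⌋ : ℝ) + 1 := Int.lt_floor_add_one (t / β)
    calc t = (t / β) * β := by rw [div_mul_cancel₀ _ hb0.ne']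
      _ < ((⌊t / β⌋ : ℝ) + 1) * β := mul_lt_mul_of_pos_right h5 hb0
  · rw [hcast]
    have h6 : (⌊t / β⌋ : ℝ) ≤ t / β := Int.floor_le (t / β)
    calc ((⌊t / β⌋ : ℝ) + 1) * β ≤ (t / β + 1) * β :=
        mul_le_mul_of_nonneg_right (by linarith) hb0.le
      _ = t + β := by rw [add_mul, div_mul_cancel₀ _ hb0.ne', one_mul]

lemma dense_fract (hrho0 : 0 < rho) (hirr : Irrational rho) {u v : ℝ} (hu0 : 0 ≤ u)
    (huv : u < v) (hv1 : v ≤ 1) :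
    ∃ m : ℕ, 1 ≤ m ∧ u < Int.fract ((m : ℝ) * rho) ∧ Int.fract ((m : ℝ) * rho) < v := by
  obtain ⟨β, hb0, hbe, m0, hm0, hfm⟩ := exists_beta hrho0 hirr (show 0 < v - u by linarith)
    (by linarith)
  set F : ℤ := ⌊(m0 : ℝ) * rho⌋ with hF
  rcases hfm with hcase | hcase
  · obtain ⟨k, hk1, hklt, hkle⟩ := exists_step hb0 hu0
    have h1 : (m0 : ℝ) * rho = (F : ℝ) + β := by
      rw [← hcase, hF]
      exact (Int.floor_add_fract _).symm
    refine ⟨k * m0, Nat.one_le_iff_ne_zero.2 (by positivity), ?_, ?_⟩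
    all_goals {
      have hkb1 : (k : ℝ) * β < 1 := by nlinarith
      have hdec : ((k * m0 : ℕ) : ℝ) * rho = (k : ℝ) * β + (((k : ℤ) * F : ℤ) : ℝ) := by
        push_cast
        rw [mul_assoc, h1]
        ring
      rw [hdec, Int.fract_add_intCast, Int.fract_eq_self.2 ⟨by positivity, hkb1⟩]
      nlinarith
    }
  · obtain ⟨k, hk1, hklt, hkle⟩ := exists_step hb0 (show (0:ℝ) ≤ 1 - v by linarith)
    have h1 : (m0 : ℝ) * rho = (F : ℝ) + (1 - β) := by
      rw [← hcase, hF]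
      exact (Int.floor_add_fract _).symm
    refine ⟨k * m0, Nat.one_le_iff_ne_zero.2 (by positivity), ?_, ?_⟩
    all_goals {
      have hkb1 : (k : ℝ) * β < 1 := by nlinarith
      have hkb0 : 0 < (k : ℝ) * β := by positivity
      have hdec : ((k * m0 : ℕ) : ℝ) * rho
          = -((k : ℝ) * β) + (((k : ℤ) * (F + 1) : ℤ) : ℝ) := by
        push_cast
        rw [mul_assoc, h1]
        ring
      have hfneg : Int.fract (-((k : ℝ) * β)) = 1 - (k : ℝ) * β := by
        rw [Int.fract_neg, Int.fract_eq_self.2 ⟨hkb0.le, hkb1⟩]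
        rw [Int.fract_eq_self.2 ⟨hkb0.le, hkb1⟩]
        exact hkb0.ne'
      rw [hdec, Int.fract_add_intCast, hfneg]
      nlinarith
    }


lemma Kfn_mono (hrho0 : 0 < rho) {x y : ℝ} (hxy : x ≤ y) (i : ℕ) :
    Kfn rho x i ≤ Kfn rho y i := by
  unfold Kfn
  have h1 : ⌊(x + i) / rho⌋ ≤ ⌊(y + i) / rho⌋ :=
    Int.floor_le_floor (by gcongr <;> linarith)
  omega

lemma Kfn_strict (hrho0 : 0 < rho) (hirr : Irrational rho) {u v : ℝ} (hu0 : 0 ≤ u)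
    (huv : u < v) (hv1 : v ≤ 1) : ∃ i : ℕ, Kfn rho u i < Kfn rho v i := by
  obtain ⟨m, hm1, hfl, hfr⟩ := dense_fract hrho0 hirr hu0 huv hv1
  have hmr0 : 0 < (m : ℝ) * rho := by
    have : (1:ℝ) ≤ (m:ℝ) := by exact_mod_cast hm1
    nlinarith
  have hflr0 : 0 ≤ ⌊(m : ℝ) * rho⌋ := Int.floor_nonneg.2 hmr0.le
  refine ⟨(⌊(m : ℝ) * rho⌋).toNat, ?_⟩
  set i : ℕ := (⌊(m : ℝ) * rho⌋).toNat with hi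
  have hic : (i : ℝ) = ((⌊(m : ℝ) * rho⌋ : ℤ) : ℝ) := by
    exact_mod_cast congrArg (fun z : ℤ => (z : ℝ)) (Int.toNat_of_nonneg hflr0)
  have hdecomp : (m : ℝ) * rho = (i : ℝ) + Int.fract ((m : ℝ) * rho) := by
    rw [hic]
    exact (Int.floor_add_fract _).symm
  have h1 : ⌊(u + i) / rho⌋ < (m : ℤ) := by
    apply Int.floor_lt.2
    push_cast
    rw [div_lt_iff₀ hrho0]
    nlinarith [hfl, hdecomp]
  have h2 : (m : ℤ) ≤ ⌊(v + i) / rho⌋ := by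
    apply Int.le_floor.2
    push_cast
    rw [le_div_iff₀ hrho0]
    nlinarith [hfr, hdecomp]
  have h3 : 0 ≤ ⌊(u + i) / rho⌋ := Int.floor_nonneg.2 (by positivity)
  unfold Kfn
  omega

theorem stmt11 (lam mu del rho : ℝ) (hlam0 : 0 < lam) (hlam1 : lam < 1) (hmu : 0 < mu)
    (hdel1 : 1 - lam < del)
    (hdel2 : del < if lam * mu < 1 then 1 else (mu - lam * mu) / (mu - 1))
    (hrho0 : 0 < rho)
    (hrho1 : rho < if lam * mu < 1 then 1 else -Real.log lam / Real.log mu) :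
    (∀ y : ℝ, phiFn lam mu del rho (y + 1) = phiFn lam mu del rho y + 1) ∧
    MonotoneOn (phiFn lam mu del rho) (Set.Ico 0 1) ∧
    (Irrational rho → StrictMonoOn (phiFn lam mu del rho) (Set.Ico 0 1)) := by
  have hrho2 : rho < 1 := rho_lt_one hlam0 hlam1 hmu hrho1
  have hA : lam * mu ^ rho < 1 := geom_aux hlam0 hlam1 hmu hrho0 hrho1
  have hkey : (lam + del - 1) * (mu - 1) < 1 - lam := key_ineq hlam0 hlam1 hmu hdel1 hdel2
  have hB : ((lam + del - 1) * (mu - 1) - (1 - lam)) / (lam * (1 - lam)) < 0 :=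
    div_neg_of_neg_of_pos (by linarith) (mul_pos hlam0 (by linarith))
  refine ⟨phi_period lam mu del rho, ?_, ?_⟩
  · intro x hx y hy hxy
    have hSx := summable_K_aux hlam0 hlam1 hmu hrho0 hA (y := x) hx.1
    have hSy := summable_K_aux hlam0 hlam1 hmu hrho0 hA (y := y) hy.1
    rw [closed_form hlam0 hlam1 hmu hrho0 hrho2 hA hSx hx.1 hx.2,
      closed_form hlam0 hlam1 hmu hrho0 hrho2 hA hSy hy.1 hy.2]
    have hle : ∑' i : ℕ, mu ^ i * lam ^ (Kfn rho y i) ≤ ∑' i : ℕ, mu ^ i * lam ^ (Kfn rho x i) := by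
      apply Summable.tsum_le_tsum (fun i => ?_) hSy hSx
      exact mul_le_mul_of_nonneg_left
        (pow_le_pow_of_le_one hlam0.le hlam1.le (Kfn_mono hrho0 hxy i))
        (pow_nonneg hmu.le i)
    have := mul_le_mul_of_nonpos_left hle hB.le
    linarith
  · intro hirr x hx y hy hxy
    have hSx := summable_K_aux hlam0 hlam1 hmu hrho0 hA (y := x) hx.1
    have hSy := summable_K_aux hlam0 hlam1 hmu hrho0 hA (y := y) hy.1
    rw [closed_form hlam0 hlam1 hmu hrho0 hrho2 hA hSx hx.1 hx.2,
      closed_form hlam0 hlam1 hmu hrho0 hrho2 hA hSy hy.1 hy.2]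
    obtain ⟨i0, hi0⟩ := Kfn_strict hrho0 hirr hx.1 hxy hy.2.le
    have hlt : ∑' i : ℕ, mu ^ i * lam ^ (Kfn rho y i) < ∑' i : ℕ, mu ^ i * lam ^ (Kfn rho x i) := by
      refine Summable.tsum_lt_tsum (i := i0) (fun i => ?_) ?_ hSy hSx
      · exact mul_le_mul_of_nonneg_left
          (pow_le_pow_of_le_one hlam0.le hlam1.le (Kfn_mono hrho0 hxy.le i))
          (pow_nonneg hmu.le i)
      · exact mul_lt_mul_of_pos_left
          (pow_lt_pow_right_of_lt_one₀ hlam0 hlam1 hi0) (pow_pos hmu i0)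
    have := mul_lt_mul_of_neg_left hlt hB
    linarith

end
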